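/- For every finite simple graph G, there exist a finite simple graph H, an injective map τ : V(H) → ℝ, and a 3-list-assignment L of H such that (H,L) is a realization of G and the ordered graph (H,τ) is M_4-free. -/
import Mathlib


/-- `(H, τ)` contains no induced ordered copy of the ordered pattern graph `P`
on vertices `0 < 1 < ⋯ < m - 1`. -/
def PatternFree {W : Type*} {m : ℕ} (H : SimpleGraph W) (τ : W → ℝ)
    (P : SimpleGraph (Fin m)) : Prop :=
  ¬ ∃ x : Fin m → W,
      (∀ i j : Fin m, i < j → τ (x i) < τ (x j)) ∧
      ∀ i j : Fin m, H.Adj (x i) (x j) ↔ P.Adj i j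

/-- The ordered graph `M₄`: six vertices `v₁ < ⋯ < v₆` with exactly the edges
`v₁v₅`, `v₂v₄`, `v₃v₆`. -/
def M4 : SimpleGraph (Fin 6) :=
  SimpleGraph.fromEdgeSet {s(0, 4), s(1, 3), s(2, 5)}

namespace RM4

/-- Swap of the adjacent positions `p, p+1`. -/
def sw (p q : ℕ) : ℕ := if q = p then p + 1 else if q = p + 1 then p else q

/-- The swap position used at time `t` (`2*n+5` means "no swap"). -/
def P (n t : ℕ) : ℕ :=
  if t % n < t / n ∧ t / n < n then t / n - 1 - t % n else 2 * n + 5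

/-- Wire occupying position `q` at time `t`. -/
def th (n : ℕ) : ℕ → ℕ → ℕ
  | 0, q => q
  | t + 1, q => th n t (sw (P n t) q)

/-- Total number of diamond columns. -/
def T (n : ℕ) : ℕ := n * n

/-- Vertices: copy columns `Fin (T n + 1) × Fin n`, diamond columns `Fin (T n) × Fin (2n)`. -/
abbrev CW (n : ℕ) : Type := (Fin (T n + 1) × Fin n) ⊕ (Fin (T n) × Fin (2 * n))

/-- Edges from copy column `t` (position `q`) into diamond column `t` (row `x`). -/
def InE (p q x : ℕ) : Prop :=
  (¬ q = p ∧ ¬ q = p + 1 ∧ (x = 2 * q ∨ x = 2 * q + 1)) ∨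
  (q = p ∧ (x = 2 * p ∨ x = 2 * p + 2 ∨ x = 2 * p + 3)) ∨
  (q = p + 1 ∧ (x = 2 * p ∨ x = 2 * p + 1 ∨ x = 2 * p + 3))

/-- Edges from diamond column `t` (row `x`) into copy column `t+1` (position `q`). -/
def OutE (p x q : ℕ) : Prop :=
  (¬ q = p ∧ ¬ q = p + 1 ∧ (x = 2 * q ∨ x = 2 * q + 1)) ∨
  (q = p ∧ (x = 2 * p ∨ x = 2 * p + 1)) ∨
  (q = p + 1 ∧ (x = 2 * p + 2 ∨ x = 2 * p + 3))

/-- Base (directed) adjacency relation of the realization graph. -/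
def base (n : ℕ) (A : ℕ → ℕ → Prop) : CW n → CW n → Prop
  | .inl (t, q), .inl (t', q') =>
      t = t' ∧ (q' : ℕ) = (q : ℕ) + 1 ∧ A (th n t q) (th n t q')
  | .inl (t, q), .inr (s, x) => (t : ℕ) = (s : ℕ) ∧ InE (P n s) q x
  | .inr (s, x), .inl (t, q) => (t : ℕ) = (s : ℕ) + 1 ∧ OutE (P n s) x q
  | .inr (s, x), .inr (s', y) =>
      s = s' ∧ (y : ℕ) = (x : ℕ) + 1 ∧ ((x : ℕ) % 2 = 0 ∨ (x : ℕ) = 2 * P n s + 1)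

/-- The realization graph. -/
def HH (n : ℕ) (A : ℕ → ℕ → Prop) : SimpleGraph (CW n) := SimpleGraph.fromRel (base n A)

/-- Column of a vertex. -/
def cl {n : ℕ} : CW n → ℕ
  | .inl (t, _) => 2 * (t : ℕ)
  | .inr (s, _) => 2 * (s : ℕ) + 1

/-- Row of a vertex. -/
def rww {n : ℕ} : CW n → ℕ
  | .inl (_, q) => (q : ℕ)
  | .inr (_, x) => (x : ℕ)

/-- Integer-valued order. -/
def tN {n : ℕ} (w : CW n) : ℕ := cl w * (2 * n + 1) + rww w

lemma Pok (n t : ℕ) : P n t = 2 * n + 5 ∨ P n t + 1 < n := by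
  unfold P; split_ifs with h
  · right; omega
  · left; rfl

lemma sw_lt {n p q : ℕ} (hp : p = 2 * n + 5 ∨ p + 1 < n) (hq : q < n) : sw p q < n := by
  unfold sw; split_ifs <;> omega

lemma th_lt (n : ℕ) : ∀ t q, q < n → th n t q < n := by
  intro t
  induction t with
  | zero => intro q hq; exact hq
  | succ t ih => intro q hq; exact ih _ (sw_lt (Pok n t) hq)

lemma rww_lt {n : ℕ} (w : CW n) : rww w < 2 * n + 1 := by
  rcases w with ⟨t, q⟩ | ⟨s, x⟩
  · have := q.isLt; simp only [rww]; omega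
  · have := x.isLt; simp only [rww]; omega

end RM4

namespace RM4

lemma lexlt {B c1 r1 c2 r2 : ℕ} (h1 : r1 < B) (h2 : r2 < B) :
    c1 * B + r1 < c2 * B + r2 ↔ (c1 < c2 ∨ (c1 = c2 ∧ r1 < r2)) := by
  constructor
  · intro h
    by_contra hc
    push_neg at hc
    obtain ⟨hle, himp⟩ := hc
    rcases Nat.lt_or_ge c2 c1 with hlt | hge
    · have h3 : (c2 + 1) * B ≤ c1 * B := Nat.mul_le_mul_right _ (by omega)
      have h4 : c2 * B + B ≤ c1 * B := by
        have : c2 * B + B = (c2 + 1) * B := by ring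
        omega
      omega
    · have hcc : c1 = c2 := by omega
      have := himp hcc
      subst hcc
      omega
  · intro h
    rcases h with h | ⟨rfl, h⟩
    · have h3 : (c1 + 1) * B ≤ c2 * B := Nat.mul_le_mul_right _ (by omega)
      have h4 : c1 * B + B ≤ c2 * B := by
        have : c1 * B + B = (c1 + 1) * B := by ring
        omega
      omega
    · omega

lemma mulB_inj {B c1 r1 c2 r2 : ℕ} (h1 : r1 < B) (h2 : r2 < B)
    (h : c1 * B + r1 = c2 * B + r2) : c1 = c2 ∧ r1 = r2 := by
  have hB : 0 < B := by omega
  have e1 : (c1 * B + r1) / B = c1 := by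
    rw [mul_comm, Nat.mul_add_div hB, Nat.div_eq_of_lt h1, add_zero]
  have e2 : (c2 * B + r2) / B = c2 := by
    rw [mul_comm, Nat.mul_add_div hB, Nat.div_eq_of_lt h2, add_zero]
  have hc : c1 = c2 := by rw [← e1, ← e2, h]
  constructor
  · exact hc
  · subst hc; omega

lemma M4_adj_iff : ∀ i j : Fin 6, M4.Adj i j ↔
    ((i = 0 ∧ j = 4) ∨ (i = 4 ∧ j = 0) ∨ (i = 1 ∧ j = 3) ∨ (i = 3 ∧ j = 1) ∨
     (i = 2 ∧ j = 5) ∨ (i = 5 ∧ j = 2)) := by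
  have key : ∀ i j : Fin 6,
      (((s(i, j) : Sym2 (Fin 6)) = s(0, 4) ∨ (s(i, j) : Sym2 (Fin 6)) = s(1, 3) ∨
        (s(i, j) : Sym2 (Fin 6)) = s(2, 5)) ∧ i ≠ j) ↔
      ((i = 0 ∧ j = 4) ∨ (i = 4 ∧ j = 0) ∨ (i = 1 ∧ j = 3) ∨ (i = 3 ∧ j = 1) ∨
       (i = 2 ∧ j = 5) ∨ (i = 5 ∧ j = 2)) := by decide
  intro i j
  rw [M4, SimpleGraph.fromEdgeSet_adj]
  simp only [Set.mem_insert_iff, Set.mem_singleton_iff]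
  exact key i j

/-- The M₄-freeness criterion: layered structure with consecutive intra-column
edges and chorded crossings implies no induced ordered copy of `M₄`. -/
lemma crit {V : Type} (H : SimpleGraph V) (cl rww : V → ℕ) (B : ℕ) (tt : V → ℕ)
    (hB : ∀ v, rww v < B)
    (htt : ∀ v, tt v = cl v * B + rww v)
    (E1 : ∀ a b, H.Adj a b → cl b ≤ cl a + 1)
    (E2 : ∀ a b, H.Adj a b → cl a = cl b → (rww b = rww a + 1 ∨ rww a = rww b + 1))
    (E3 : ∀ a b c d, H.Adj a d → H.Adj b c → cl a = cl b → cl c = cl d →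
      cl c = cl a + 1 → rww a < rww b → rww c < rww d →
      H.Adj a c ∨ H.Adj b d ∨ H.Adj a b ∨ H.Adj c d) :
    PatternFree H (fun v => ((tt v : ℕ) : ℝ)) M4 := by
  rintro ⟨x, hm, hadj⟩
  have hlt : ∀ i j : Fin 6, i < j →
      (cl (x i) < cl (x j) ∨ (cl (x i) = cl (x j) ∧ rww (x i) < rww (x j))) := by
    intro i j hij
    have h0' := hm i j hij
    simp only at h0'
    have h0 : tt (x i) < tt (x j) := by exact_mod_cast h0'
    rw [htt, htt] at h0
    exact (lexlt (hB _) (hB _)).1 h0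
  have A04 : H.Adj (x 0) (x 4) := (hadj 0 4).2 ((M4_adj_iff 0 4).2 (by decide))
  have A13 : H.Adj (x 1) (x 3) := (hadj 1 3).2 ((M4_adj_iff 1 3).2 (by decide))
  have N01 : ¬ H.Adj (x 0) (x 1) := fun h =>
    absurd ((M4_adj_iff 0 1).1 ((hadj 0 1).1 h)) (by decide)
  have N03 : ¬ H.Adj (x 0) (x 3) := fun h =>
    absurd ((M4_adj_iff 0 3).1 ((hadj 0 3).1 h)) (by decide)
  have N14 : ¬ H.Adj (x 1) (x 4) := fun h =>
    absurd ((M4_adj_iff 1 4).1 ((hadj 1 4).1 h)) (by decide)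
  have N34 : ¬ H.Adj (x 3) (x 4) := fun h =>
    absurd ((M4_adj_iff 3 4).1 ((hadj 3 4).1 h)) (by decide)
  have h01 := hlt 0 1 (by decide)
  have h12 := hlt 1 2 (by decide)
  have h23 := hlt 2 3 (by decide)
  have h34 := hlt 3 4 (by decide)
  have h13 := hlt 1 3 (by decide)
  have hE1a := E1 _ _ A04
  have hE1b := E1 _ _ A13
  by_cases hc04 : cl (x 0) = cl (x 4)
  · -- all columns equal; rows strictly increase, contradicting E2 gap of 1
    have hE2 := E2 _ _ A04 hc04
    omega
  · have hc4 : cl (x 4) = cl (x 0) + 1 := by omega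
    by_cases hc13 : cl (x 1) = cl (x 3)
    · have hE2 := E2 _ _ A13 hc13
      omega
    · have hc3 : cl (x 3) = cl (x 1) + 1 := by omega
      have hab : cl (x 0) = cl (x 1) := by omega
      have hcd : cl (x 3) = cl (x 4) := by omega
      have hr1 : rww (x 0) < rww (x 1) := by omega
      have hr2 : rww (x 3) < rww (x 4) := by omega
      rcases E3 (x 0) (x 1) (x 3) (x 4) A04 A13 hab hcd (by omega) hr1 hr2 with h | h | h | h
      exacts [N03 h, N14 h, N01 h, N34 h]

end RM4


namespace RM4

lemma hhE1 (n : ℕ) (A : ℕ → ℕ → Prop) :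
    ∀ a b : CW n, (HH n A).Adj a b → cl b ≤ cl a + 1 := by
  intro a b h
  rw [HH, SimpleGraph.fromRel_adj] at h
  obtain ⟨hne, h⟩ := h
  rcases a with ⟨ta, qa⟩ | ⟨sa, xa⟩ <;> rcases b with ⟨tb, qb⟩ | ⟨sb, xb⟩ <;>
    simp only [base, cl] at h ⊢ <;> rcases h with h | h <;> omega

lemma hhE2 (n : ℕ) (A : ℕ → ℕ → Prop) :
    ∀ a b : CW n, (HH n A).Adj a b → cl a = cl b →
      (rww b = rww a + 1 ∨ rww a = rww b + 1) := by
  intro a b h hc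
  rw [HH, SimpleGraph.fromRel_adj] at h
  obtain ⟨hne, h⟩ := h
  rcases a with ⟨ta, qa⟩ | ⟨sa, xa⟩ <;> rcases b with ⟨tb, qb⟩ | ⟨sb, xb⟩ <;>
    simp only [base, cl, rww] at h hc ⊢ <;> rcases h with h | h <;> omega

lemma hhE3 (n : ℕ) (A : ℕ → ℕ → Prop) :
    ∀ a b c d : CW n, (HH n A).Adj a d → (HH n A).Adj b c → cl a = cl b → cl c = cl d →
      cl c = cl a + 1 → rww a < rww b → rww c < rww d →
      (HH n A).Adj a c ∨ (HH n A).Adj b d ∨ (HH n A).Adj a b ∨ (HH n A).Adj c d := by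
  intro a b c d had hbc hab hcd hca hr1 hr2
  rw [HH, SimpleGraph.fromRel_adj] at had hbc
  obtain ⟨hne1, had⟩ := had
  obtain ⟨hne2, hbc⟩ := hbc
  rcases a with ⟨ta, qa⟩ | ⟨sa, xa⟩
  · -- a is a copy vertex, column 2 ta
    rcases b with ⟨tb, qb⟩ | ⟨sb, xb⟩
    swap
    · exfalso; simp only [cl] at hab; omega
    rcases c with ⟨tc, qc⟩ | ⟨sc, xc⟩
    · exfalso; simp only [cl] at hab hca; omega
    rcases d with ⟨td, qd⟩ | ⟨sd, xd⟩
    · exfalso; simp only [cl] at hcd; omega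
    simp only [cl] at hab hcd hca
    simp only [rww] at hr1 hr2
    have had' : InE (P n (sd : ℕ)) (qa : ℕ) (xd : ℕ) := by
      rcases had with h | h <;> simp only [base] at h
      · exact h.2
      · exfalso; omega
    have hbc' : InE (P n (sc : ℕ)) (qb : ℕ) (xc : ℕ) := by
      rcases hbc with h | h <;> simp only [base] at h
      · exact h.2
      · exfalso; omega
    have hsd : (sd : ℕ) = (sc : ℕ) := by omega
    have hP2 : P n (sd : ℕ) = P n (sc : ℕ) := by rw [hsd]
    have hta : (ta : ℕ) = (sc : ℕ) := by omega
    have htb : (tb : ℕ) = (sc : ℕ) := by omega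
    rcases had' with ⟨h1, h2, h3⟩ | ⟨h1, h3⟩ | ⟨h1, h3⟩ <;>
      rcases hbc' with ⟨g1, g2, g3⟩ | ⟨g1, g3⟩ | ⟨g1, g3⟩
    -- only the case qa = P, qb = P+1 can give a crossing
    · exfalso; omega
    · exfalso; omega
    · exfalso; omega
    · exfalso; omega
    · exfalso; omega
    · -- qa = p, qb = p + 1
      rcases h3 with h3 | h3 | h3 <;> rcases g3 with g3 | g3 | g3
      · exfalso; omega
      · exfalso; omega
      · exfalso; omega
      · -- xd = 2p+2, xc = 2p : chord a-c
        refine Or.inl ?_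
        rw [HH, SimpleGraph.fromRel_adj]
        refine ⟨by simp, Or.inl ?_⟩
        show (ta : ℕ) = (sc : ℕ) ∧ InE (P n (sc : ℕ)) (qa : ℕ) (xc : ℕ)
        exact ⟨hta, by unfold InE; omega⟩
      · -- xd = 2p+2, xc = 2p+1 : chord c-d
        refine Or.inr (Or.inr (Or.inr ?_))
        rw [HH, SimpleGraph.fromRel_adj]
        refine ⟨?_, Or.inl ?_⟩
        · intro hEq
          rw [Sum.inr.injEq, Prod.mk.injEq] at hEq
          have := congrArg Fin.val hEq.2; omega
        · show sc = sd ∧ (xd : ℕ) = (xc : ℕ) + 1 ∧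
            ((xc : ℕ) % 2 = 0 ∨ (xc : ℕ) = 2 * P n (sc : ℕ) + 1)
          exact ⟨Fin.ext (by omega), by omega, by omega⟩
      · exfalso; omega
      · -- xd = 2p+3, xc = 2p : chord a-c
        refine Or.inl ?_
        rw [HH, SimpleGraph.fromRel_adj]
        refine ⟨by simp, Or.inl ?_⟩
        show (ta : ℕ) = (sc : ℕ) ∧ InE (P n (sc : ℕ)) (qa : ℕ) (xc : ℕ)
        exact ⟨hta, by unfold InE; omega⟩
      · -- xd = 2p+3, xc = 2p+1 : chord b-d
        refine Or.inr (Or.inl ?_)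
        rw [HH, SimpleGraph.fromRel_adj]
        refine ⟨by simp, Or.inl ?_⟩
        show (tb : ℕ) = (sd : ℕ) ∧ InE (P n (sd : ℕ)) (qb : ℕ) (xd : ℕ)
        exact ⟨by omega, by unfold InE; omega⟩
      · exfalso; omega
    · exfalso; omega
    · exfalso; omega
    · exfalso; omega
  · -- a is a diamond vertex : crossing impossible by monotonicity
    exfalso
    rcases b with ⟨tb, qb⟩ | ⟨sb, xb⟩
    · simp only [cl] at hab; omega
    rcases c with ⟨tc, qc⟩ | ⟨sc, xc⟩
    swap
    · simp only [cl] at hab hca; omega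
    rcases d with ⟨td, qd⟩ | ⟨sd, xd⟩
    swap
    · simp only [cl] at hcd; omega
    simp only [cl] at hab hcd hca
    simp only [rww] at hr1 hr2
    have had' : OutE (P n (sa : ℕ)) (xa : ℕ) (qd : ℕ) := by
      rcases had with h | h <;> simp only [base] at h
      · exact h.2
      · exfalso; omega
    have hbc' : OutE (P n (sb : ℕ)) (xb : ℕ) (qc : ℕ) := by
      rcases hbc with h | h <;> simp only [base] at h
      · exact h.2
      · exfalso; omega
    have hsb : (sb : ℕ) = (sa : ℕ) := by omega
    have hP2 : P n (sb : ℕ) = P n (sa : ℕ) := by rw [hsb]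
    rcases had' with ⟨h1, h2, h3⟩ | ⟨h1, h3⟩ | ⟨h1, h3⟩ <;>
      rcases hbc' with ⟨g1, g2, g3⟩ | ⟨g1, g3⟩ | ⟨g1, g3⟩ <;> omega

end RM4


namespace RM4

/-- Closed form of the position map inside block `b` after `s` swaps. -/
def Th (b s q : ℕ) : ℕ :=
  if q < b - s then b - 1 - q else if q = b - s then b else if q ≤ b then b - q else q

lemma swBIG {n q : ℕ} (hq : q < n) : sw (2 * n + 5) q = q := by
  unfold sw; split_ifs <;> omega

lemma Pval1 {n b s : ℕ} (hn : 0 < n) (hs : s < n) (hsb : s < b) (hbn : b < n) :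
    P n (b * n + s) = b - 1 - s := by
  unfold P
  have h1 : (b * n + s) / n = b := by
    rw [add_comm, Nat.add_mul_div_right _ _ hn, Nat.div_eq_of_lt hs, Nat.zero_add]
  have h2 : (b * n + s) % n = s := by
    rw [add_comm, Nat.add_mul_mod_self_right, Nat.mod_eq_of_lt hs]
  rw [h1, h2, if_pos ⟨hsb, hbn⟩]

lemma Pval2 {n b s : ℕ} (hn : 0 < n) (hs : s < n) (h : ¬(s < b ∧ b < n)) :
    P n (b * n + s) = 2 * n + 5 := by
  unfold P
  have h1 : (b * n + s) / n = b := by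
    rw [add_comm, Nat.add_mul_div_right _ _ hn, Nat.div_eq_of_lt hs, Nat.zero_add]
  have h2 : (b * n + s) % n = s := by
    rw [add_comm, Nat.add_mul_mod_self_right, Nat.mod_eq_of_lt hs]
  rw [h1, h2, if_neg h]

lemma ThStep (b s q : ℕ) (h : s < b) : Th b s (sw (b - 1 - s) q) = Th b (s + 1) q := by
  unfold Th sw; split_ifs <;> omega

lemma thF (n : ℕ) (hn : 0 < n) :
    ∀ b, b < n → ∀ s, s ≤ n → ∀ q, q < n → th n (b * n + s) q = Th b (min s b) q := by
  intro b
  induction b with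
  | zero =>
    intro hb s
    induction s with
    | zero =>
      intro hs q hq
      rw [show 0 * n + 0 = 0 from by ring]
      show q = Th 0 (min 0 0) q
      unfold Th; split_ifs <;> omega
    | succ s ihs =>
      intro hs q hq
      have hsn : s < n := by omega
      rw [show 0 * n + (s + 1) = (0 * n + s) + 1 from by ring]
      show th n (0 * n + s) (sw (P n (0 * n + s)) q) = Th 0 (min (s + 1) 0) q
      rw [Pval2 hn hsn (by omega), swBIG hq, ihs (by omega) q hq]
      have e1 : min s 0 = 0 := by omega
      have e2 : min (s + 1) 0 = 0 := by omega
      rw [e1, e2]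
  | succ b ihb =>
    intro hb s
    induction s with
    | zero =>
      intro hs q hq
      rw [show (b + 1) * n + 0 = b * n + n from by ring]
      rw [ihb (by omega) n le_rfl q hq]
      have e1 : min n b = b := by omega
      have e2 : min 0 (b + 1) = 0 := by omega
      rw [e1, e2]
      unfold Th; split_ifs <;> omega
    | succ s ihs =>
      intro hs q hq
      have hsn : s < n := by omega
      rw [show (b + 1) * n + (s + 1) = ((b + 1) * n + s) + 1 from by ring]
      show th n ((b + 1) * n + s) (sw (P n ((b + 1) * n + s)) q) = Th (b + 1) (min (s + 1) (b + 1)) q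
      by_cases hsb : s < b + 1
      · rw [Pval1 hn hsn hsb hb]
        have hswlt : sw (b + 1 - 1 - s) q < n := by unfold sw; split_ifs <;> omega
        rw [ihs (by omega) _ hswlt]
        have e1 : min s (b + 1) = s := by omega
        have e2 : min (s + 1) (b + 1) = s + 1 := by omega
        rw [e1, e2]
        exact ThStep (b + 1) s q hsb
      · rw [Pval2 hn hsn (by omega), swBIG hq, ihs (by omega) q hq]
        have e1 : min s (b + 1) = b + 1 := by omega
        have e2 : min (s + 1) (b + 1) = b + 1 := by omega
        rw [e1, e2]

lemma meet {n k j : ℕ} (hkj : k < j) (hjn : j < n) :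
    th n (j * n + k) (j - k - 1) = k ∧ th n (j * n + k) (j - k) = j ∧ j * n + k < T n := by
  have hn : 0 < n := by omega
  have h1 := thF n hn j hjn k (by omega) (j - k - 1) (by omega)
  have h2 := thF n hn j hjn k (by omega) (j - k) (by omega)
  have hmin : min k j = k := by omega
  rw [hmin] at h1 h2
  refine ⟨?_, ?_, ?_⟩
  · rw [h1]; unfold Th; split_ifs <;> omega
  · rw [h2]; unfold Th; split_ifs <;> omega
  · have h3 := Nat.mul_le_mul_right n (show j + 1 ≤ n by omega)
    have h4 : (j + 1) * n = j * n + n := by ring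
    unfold T; omega

end RM4


namespace RM4

lemma pig : ∀ v a b w : Fin 3, a ≠ v → b ≠ v → a ≠ b → w ≠ a → w ≠ b → w = v := by decide

lemma inr_ne {n : ℕ} {s s' : Fin (T n)} {x x' : Fin (2 * n)} (h : (x : ℕ) ≠ (x' : ℕ)) :
    (Sum.inr (s, x) : CW n) ≠ Sum.inr (s', x') := by
  intro hEq
  rw [Sum.inr.injEq, Prod.mk.injEq] at hEq
  exact h (congrArg Fin.val hEq.2)

lemma step (n : ℕ) (A : ℕ → ℕ → Prop) (f : CW n → Fin 3)
    (hf : ∀ x y, (HH n A).Adj x y → f x ≠ f y)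
    (t q q' : ℕ) (ht : t < T n) (hq : q < n) (hq' : q' < n)
    (hsw : sw (P n t) q = q') :
    f (.inl (⟨t + 1, by omega⟩, ⟨q, hq⟩)) = f (.inl (⟨t, by omega⟩, ⟨q', hq'⟩)) := by
  have hpok := Pok n t
  by_cases h1 : q = P n t
  · -- q = p : previous position is p+1, via diamonds 2p, 2p+1
    have hpn : P n t + 1 < n := by rcases hpok with h | h <;> omega
    have hq'' : q' = P n t + 1 := by rw [← hsw]; unfold sw; split_ifs <;> omega
    have e1 : (HH n A).Adj (.inl (⟨t, by omega⟩, ⟨q', hq'⟩))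
        (.inr (⟨t, ht⟩, ⟨2 * P n t, by omega⟩)) := by
      rw [HH, SimpleGraph.fromRel_adj]
      exact ⟨by simp, Or.inl ⟨rfl, show InE (P n t) q' (2 * P n t) by unfold InE; omega⟩⟩
    have e2 : (HH n A).Adj (.inl (⟨t, by omega⟩, ⟨q', hq'⟩))
        (.inr (⟨t, ht⟩, ⟨2 * P n t + 1, by omega⟩)) := by
      rw [HH, SimpleGraph.fromRel_adj]
      exact ⟨by simp, Or.inl ⟨rfl, show InE (P n t) q' (2 * P n t + 1) by unfold InE; omega⟩⟩
    have e3 : (HH n A).Adj (.inr (⟨t, ht⟩, ⟨2 * P n t, by omega⟩))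
        (.inr (⟨t, ht⟩, ⟨2 * P n t + 1, by omega⟩)) := by
      rw [HH, SimpleGraph.fromRel_adj]
      refine ⟨inr_ne (show 2 * P n t ≠ 2 * P n t + 1 by omega), Or.inl ?_⟩
      exact ⟨rfl, show 2 * P n t + 1 = 2 * P n t + 1 from rfl,
        Or.inl (show 2 * P n t % 2 = 0 by omega)⟩
    have e4 : (HH n A).Adj (.inr (⟨t, ht⟩, ⟨2 * P n t, by omega⟩))
        (.inl (⟨t + 1, by omega⟩, ⟨q, hq⟩)) := by
      rw [HH, SimpleGraph.fromRel_adj]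
      exact ⟨by simp, Or.inl ⟨show t + 1 = t + 1 from rfl,
        show OutE (P n t) (2 * P n t) q by unfold OutE; omega⟩⟩
    have e5 : (HH n A).Adj (.inr (⟨t, ht⟩, ⟨2 * P n t + 1, by omega⟩))
        (.inl (⟨t + 1, by omega⟩, ⟨q, hq⟩)) := by
      rw [HH, SimpleGraph.fromRel_adj]
      exact ⟨by simp, Or.inl ⟨show t + 1 = t + 1 from rfl,
        show OutE (P n t) (2 * P n t + 1) q by unfold OutE; omega⟩⟩
    exact pig _ _ _ _ ((hf _ _ e1).symm) ((hf _ _ e2).symm) (hf _ _ e3)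
      ((hf _ _ e4).symm) ((hf _ _ e5).symm)
  · by_cases h2 : q = P n t + 1
    · -- q = p+1 : previous position is p, via diamonds 2p+2, 2p+3
      have hq'' : q' = P n t := by rw [← hsw]; unfold sw; split_ifs <;> omega
      have e1 : (HH n A).Adj (.inl (⟨t, by omega⟩, ⟨q', hq'⟩))
          (.inr (⟨t, ht⟩, ⟨2 * P n t + 2, by omega⟩)) := by
        rw [HH, SimpleGraph.fromRel_adj]
        exact ⟨by simp, Or.inl ⟨rfl, show InE (P n t) q' (2 * P n t + 2) by unfold InE; omega⟩⟩
      have e2 : (HH n A).Adj (.inl (⟨t, by omega⟩, ⟨q', hq'⟩))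
          (.inr (⟨t, ht⟩, ⟨2 * P n t + 3, by omega⟩)) := by
        rw [HH, SimpleGraph.fromRel_adj]
        exact ⟨by simp, Or.inl ⟨rfl, show InE (P n t) q' (2 * P n t + 3) by unfold InE; omega⟩⟩
      have e3 : (HH n A).Adj (.inr (⟨t, ht⟩, ⟨2 * P n t + 2, by omega⟩))
          (.inr (⟨t, ht⟩, ⟨2 * P n t + 3, by omega⟩)) := by
        rw [HH, SimpleGraph.fromRel_adj]
        refine ⟨inr_ne (show 2 * P n t + 2 ≠ 2 * P n t + 3 by omega), Or.inl ?_⟩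
        exact ⟨rfl, show 2 * P n t + 3 = 2 * P n t + 2 + 1 from rfl,
          Or.inl (show (2 * P n t + 2) % 2 = 0 by omega)⟩
      have e4 : (HH n A).Adj (.inr (⟨t, ht⟩, ⟨2 * P n t + 2, by omega⟩))
          (.inl (⟨t + 1, by omega⟩, ⟨q, hq⟩)) := by
        rw [HH, SimpleGraph.fromRel_adj]
        exact ⟨by simp, Or.inl ⟨show t + 1 = t + 1 from rfl,
          show OutE (P n t) (2 * P n t + 2) q by unfold OutE; omega⟩⟩
      have e5 : (HH n A).Adj (.inr (⟨t, ht⟩, ⟨2 * P n t + 3, by omega⟩))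
          (.inl (⟨t + 1, by omega⟩, ⟨q, hq⟩)) := by
        rw [HH, SimpleGraph.fromRel_adj]
        exact ⟨by simp, Or.inl ⟨show t + 1 = t + 1 from rfl,
          show OutE (P n t) (2 * P n t + 3) q by unfold OutE; omega⟩⟩
      exact pig _ _ _ _ ((hf _ _ e1).symm) ((hf _ _ e2).symm) (hf _ _ e3)
        ((hf _ _ e4).symm) ((hf _ _ e5).symm)
    · -- plain wire step
      have hq'' : q' = q := by rw [← hsw]; unfold sw; split_ifs <;> omega
      have e1 : (HH n A).Adj (.inl (⟨t, by omega⟩, ⟨q', hq'⟩))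
          (.inr (⟨t, ht⟩, ⟨2 * q, by omega⟩)) := by
        rw [HH, SimpleGraph.fromRel_adj]
        exact ⟨by simp, Or.inl ⟨rfl, show InE (P n t) q' (2 * q) by unfold InE; omega⟩⟩
      have e2 : (HH n A).Adj (.inl (⟨t, by omega⟩, ⟨q', hq'⟩))
          (.inr (⟨t, ht⟩, ⟨2 * q + 1, by omega⟩)) := by
        rw [HH, SimpleGraph.fromRel_adj]
        exact ⟨by simp, Or.inl ⟨rfl, show InE (P n t) q' (2 * q + 1) by unfold InE; omega⟩⟩
      have e3 : (HH n A).Adj (.inr (⟨t, ht⟩, ⟨2 * q, by omega⟩))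
          (.inr (⟨t, ht⟩, ⟨2 * q + 1, by omega⟩)) := by
        rw [HH, SimpleGraph.fromRel_adj]
        refine ⟨inr_ne (show 2 * q ≠ 2 * q + 1 by omega), Or.inl ?_⟩
        exact ⟨rfl, show 2 * q + 1 = 2 * q + 1 from rfl, Or.inl (show 2 * q % 2 = 0 by omega)⟩
      have e4 : (HH n A).Adj (.inr (⟨t, ht⟩, ⟨2 * q, by omega⟩))
          (.inl (⟨t + 1, by omega⟩, ⟨q, hq⟩)) := by
        rw [HH, SimpleGraph.fromRel_adj]
        exact ⟨by simp, Or.inl ⟨show t + 1 = t + 1 from rfl,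
          show OutE (P n t) (2 * q) q by unfold OutE; omega⟩⟩
      have e5 : (HH n A).Adj (.inr (⟨t, ht⟩, ⟨2 * q + 1, by omega⟩))
          (.inl (⟨t + 1, by omega⟩, ⟨q, hq⟩)) := by
        rw [HH, SimpleGraph.fromRel_adj]
        exact ⟨by simp, Or.inl ⟨show t + 1 = t + 1 from rfl,
          show OutE (P n t) (2 * q + 1) q by unfold OutE; omega⟩⟩
      exact pig _ _ _ _ ((hf _ _ e1).symm) ((hf _ _ e2).symm) (hf _ _ e3)
        ((hf _ _ e4).symm) ((hf _ _ e5).symm)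

lemma soundT (n : ℕ) (A : ℕ → ℕ → Prop) (f : CW n → Fin 3)
    (hf : ∀ x y, (HH n A).Adj x y → f x ≠ f y) :
    ∀ t (ht : t ≤ T n) (q : ℕ) (hq : q < n),
      f (.inl (⟨t, by omega⟩, ⟨q, hq⟩)) =
        f (.inl (⟨0, by omega⟩, ⟨th n t q, th_lt n t q hq⟩)) := by
  intro t
  induction t with
  | zero => intro ht q hq; rfl
  | succ t ih =>
    intro ht q hq
    have hstep := step n A f hf t q (sw (P n t) q) (by omega) hq (sw_lt (Pok n t) hq) rfl
    rw [hstep, ih (by omega) _ (sw_lt (Pok n t) hq)]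
    rfl

end RM4


namespace RM4

lemma F3a : ∀ v : Fin 3, ¬ v = v + 1 := by decide
lemma F3a' : ∀ v : Fin 3, ¬ v + 1 = v := by decide
lemma F3b : ∀ v : Fin 3, ¬ v = v + 2 := by decide
lemma F3b' : ∀ v : Fin 3, ¬ v + 2 = v := by decide
lemma F3e : ∀ v : Fin 3, ¬ v + 1 = v + 2 := by decide
lemma F3f : ∀ v : Fin 3, ¬ v + 2 = v + 1 := by decide
lemma F3c : ∀ u v : Fin 3, ¬ u = v → ¬ u = 2 * (u + v) := by decide
lemma F3c' : ∀ u v : Fin 3, ¬ u = v → ¬ 2 * (u + v) = u := by decide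
lemma F3d : ∀ u v : Fin 3, ¬ u = v → ¬ v = 2 * (u + v) := by decide
lemma F3d' : ∀ u v : Fin 3, ¬ u = v → ¬ 2 * (u + v) = v := by decide

/-- The value given to diamond vertex `(s, x)` by the canonical extension. -/
def dval (n : ℕ) (c : ℕ → Fin 3) (s x : ℕ) : Fin 3 :=
  if x = 2 * P n s then
    (if c (th n s (P n s)) = c (th n s (P n s + 1)) then c (th n s (P n s + 1)) + 1
     else 2 * (c (th n s (P n s)) + c (th n s (P n s + 1))))
  else if x = 2 * P n s + 1 then
    (if c (th n s (P n s)) = c (th n s (P n s + 1)) then c (th n s (P n s + 1)) + 2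
     else c (th n s (P n s)))
  else if x = 2 * P n s + 2 then
    (if c (th n s (P n s)) = c (th n s (P n s + 1)) then c (th n s (P n s)) + 1
     else c (th n s (P n s + 1)))
  else if x = 2 * P n s + 3 then
    (if c (th n s (P n s)) = c (th n s (P n s + 1)) then c (th n s (P n s)) + 2
     else 2 * (c (th n s (P n s)) + c (th n s (P n s + 1))))
  else if x % 2 = 0 then c (th n s (x / 2)) + 1 else c (th n s (x / 2)) + 2

/-- The canonical extension of a wire coloring to the whole gadget graph. -/
def fc (n : ℕ) (c : ℕ → Fin 3) : CW n → Fin 3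
  | .inl (t, q) => c (th n t q)
  | .inr (s, x) => dval n c s x

lemma ine_ne (n : ℕ) (c : ℕ → Fin 3) (s q x : ℕ) (hIn : InE (P n s) q x) :
    c (th n s q) ≠ dval n c s x := by
  rcases hIn with ⟨h1, h2, h3⟩ | ⟨h1, h3⟩ | ⟨h1, h3⟩
  · unfold dval
    rcases h3 with h3 | h3
    · rw [if_neg (by omega), if_neg (by omega), if_neg (by omega), if_neg (by omega),
        if_pos (by omega : x % 2 = 0), show x / 2 = q by omega]
      exact F3a _
    · rw [if_neg (by omega), if_neg (by omega), if_neg (by omega), if_neg (by omega),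
        if_neg (by omega : ¬ x % 2 = 0), show x / 2 = q by omega]
      exact F3b _
  · subst h1
    unfold dval
    rcases h3 with h3 | h3 | h3
    · rw [if_pos h3]
      by_cases hxy : c (th n s (P n s)) = c (th n s (P n s + 1))
      · rw [if_pos hxy, hxy]; exact F3a _
      · rw [if_neg hxy]; exact F3c _ _ hxy
    · rw [if_neg (by omega), if_neg (by omega), if_pos h3]
      by_cases hxy : c (th n s (P n s)) = c (th n s (P n s + 1))
      · rw [if_pos hxy]; exact F3a _
      · rw [if_neg hxy]; exact hxy
    · rw [if_neg (by omega), if_neg (by omega), if_neg (by omega), if_pos h3]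
      by_cases hxy : c (th n s (P n s)) = c (th n s (P n s + 1))
      · rw [if_pos hxy]; exact F3b _
      · rw [if_neg hxy]; exact F3c _ _ hxy
  · subst h1
    unfold dval
    rcases h3 with h3 | h3 | h3
    · rw [if_pos h3]
      by_cases hxy : c (th n s (P n s)) = c (th n s (P n s + 1))
      · rw [if_pos hxy]; exact F3a _
      · rw [if_neg hxy]; exact F3d _ _ hxy
    · rw [if_neg (by omega), if_pos h3]
      by_cases hxy : c (th n s (P n s)) = c (th n s (P n s + 1))
      · rw [if_pos hxy]; exact F3b _
      · rw [if_neg hxy]; exact fun h => hxy h.symm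
    · rw [if_neg (by omega), if_neg (by omega), if_neg (by omega), if_pos h3]
      by_cases hxy : c (th n s (P n s)) = c (th n s (P n s + 1))
      · rw [if_pos hxy, hxy]; exact F3b _
      · rw [if_neg hxy]; exact F3d _ _ hxy

lemma oute_ne (n : ℕ) (c : ℕ → Fin 3) (s x q : ℕ) (hOut : OutE (P n s) x q) :
    dval n c s x ≠ c (th n (s + 1) q) := by
  have hth : th n (s + 1) q = th n s (sw (P n s) q) := rfl
  rw [hth]
  rcases hOut with ⟨h1, h2, h3⟩ | ⟨h1, h3⟩ | ⟨h1, h3⟩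
  · have hsw : sw (P n s) q = q := by unfold sw; split_ifs <;> omega
    rw [hsw]
    unfold dval
    rcases h3 with h3 | h3
    · rw [if_neg (by omega), if_neg (by omega), if_neg (by omega), if_neg (by omega),
        if_pos (by omega : x % 2 = 0), show x / 2 = q by omega]
      exact F3a' _
    · rw [if_neg (by omega), if_neg (by omega), if_neg (by omega), if_neg (by omega),
        if_neg (by omega : ¬ x % 2 = 0), show x / 2 = q by omega]
      exact F3b' _
  · subst h1
    have hsw : sw (P n s) (P n s) = P n s + 1 := by unfold sw; split_ifs <;> omega
    rw [hsw]
    unfold dval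
    rcases h3 with h3 | h3
    · rw [if_pos h3]
      by_cases hxy : c (th n s (P n s)) = c (th n s (P n s + 1))
      · rw [if_pos hxy]; exact F3a' _
      · rw [if_neg hxy]; exact F3d' _ _ hxy
    · rw [if_neg (by omega), if_pos h3]
      by_cases hxy : c (th n s (P n s)) = c (th n s (P n s + 1))
      · rw [if_pos hxy]; exact F3b' _
      · rw [if_neg hxy]; exact hxy
  · subst h1
    have hsw : sw (P n s) (P n s + 1) = P n s := by unfold sw; split_ifs <;> omega
    rw [hsw]
    unfold dval
    rcases h3 with h3 | h3
    · rw [if_neg (by omega), if_neg (by omega), if_pos h3]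
      by_cases hxy : c (th n s (P n s)) = c (th n s (P n s + 1))
      · rw [if_pos hxy]; exact F3a' _
      · rw [if_neg hxy]; exact fun h => hxy h.symm
    · rw [if_neg (by omega), if_neg (by omega), if_neg (by omega), if_pos h3]
      by_cases hxy : c (th n s (P n s)) = c (th n s (P n s + 1))
      · rw [if_pos hxy]; exact F3b' _
      · rw [if_neg hxy]; exact F3c' _ _ hxy

lemma intra_ne (n : ℕ) (c : ℕ → Fin 3) (s x : ℕ)
    (hpar : x % 2 = 0 ∨ x = 2 * P n s + 1) :
    dval n c s x ≠ dval n c s (x + 1) := by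
  unfold dval
  by_cases hxy : c (th n s (P n s)) = c (th n s (P n s + 1))
  · simp only [if_pos hxy]
    by_cases e0 : x = 2 * P n s
    · rw [if_pos e0, if_neg (show ¬ x + 1 = 2 * P n s by omega),
        if_pos (show x + 1 = 2 * P n s + 1 by omega)]
      exact F3e _
    · by_cases e1 : x = 2 * P n s + 1
      · rw [if_neg e0, if_pos e1, if_neg (show ¬ x + 1 = 2 * P n s by omega),
          if_neg (show ¬ x + 1 = 2 * P n s + 1 by omega),
          if_pos (show x + 1 = 2 * P n s + 2 by omega), hxy]
        exact F3f _
      · by_cases e2 : x = 2 * P n s + 2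
        · rw [if_neg e0, if_neg e1, if_pos e2, if_neg (show ¬ x + 1 = 2 * P n s by omega),
            if_neg (show ¬ x + 1 = 2 * P n s + 1 by omega),
            if_neg (show ¬ x + 1 = 2 * P n s + 2 by omega),
            if_pos (show x + 1 = 2 * P n s + 3 by omega)]
          exact F3e _
        · have hpx : x % 2 = 0 := by
            rcases hpar with h | h
            · exact h
            · exact absurd h e1
          rw [if_neg e0, if_neg e1, if_neg e2,
            if_neg (show ¬ x = 2 * P n s + 3 by omega), if_pos hpx,
            if_neg (show ¬ x + 1 = 2 * P n s by omega),
            if_neg (show ¬ x + 1 = 2 * P n s + 1 by omega),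
            if_neg (show ¬ x + 1 = 2 * P n s + 2 by omega),
            if_neg (show ¬ x + 1 = 2 * P n s + 3 by omega),
            if_neg (show ¬ (x + 1) % 2 = 0 by omega),
            show (x + 1) / 2 = x / 2 by omega]
          exact F3e _
  · simp only [if_neg hxy]
    by_cases e0 : x = 2 * P n s
    · rw [if_pos e0, if_neg (show ¬ x + 1 = 2 * P n s by omega),
        if_pos (show x + 1 = 2 * P n s + 1 by omega)]
      exact F3c' _ _ hxy
    · by_cases e1 : x = 2 * P n s + 1
      · rw [if_neg e0, if_pos e1, if_neg (show ¬ x + 1 = 2 * P n s by omega),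
          if_neg (show ¬ x + 1 = 2 * P n s + 1 by omega),
          if_pos (show x + 1 = 2 * P n s + 2 by omega)]
        exact hxy
      · by_cases e2 : x = 2 * P n s + 2
        · rw [if_neg e0, if_neg e1, if_pos e2, if_neg (show ¬ x + 1 = 2 * P n s by omega),
            if_neg (show ¬ x + 1 = 2 * P n s + 1 by omega),
            if_neg (show ¬ x + 1 = 2 * P n s + 2 by omega),
            if_pos (show x + 1 = 2 * P n s + 3 by omega)]
          exact F3d _ _ hxy
        · have hpx : x % 2 = 0 := by
            rcases hpar with h | h
            · exact h
            · exact absurd h e1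
          rw [if_neg e0, if_neg e1, if_neg e2,
            if_neg (show ¬ x = 2 * P n s + 3 by omega), if_pos hpx,
            if_neg (show ¬ x + 1 = 2 * P n s by omega),
            if_neg (show ¬ x + 1 = 2 * P n s + 1 by omega),
            if_neg (show ¬ x + 1 = 2 * P n s + 2 by omega),
            if_neg (show ¬ x + 1 = 2 * P n s + 3 by omega),
            if_neg (show ¬ (x + 1) % 2 = 0 by omega),
            show (x + 1) / 2 = x / 2 by omega]
          exact F3e _

lemma fc_proper (n : ℕ) (A : ℕ → ℕ → Prop) (c : ℕ → Fin 3)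
    (hc : ∀ a b : ℕ, A a b → c a ≠ c b) :
    ∀ x y, (HH n A).Adj x y → fc n c x ≠ fc n c y := by
  have key : ∀ x y, base n A x y → fc n c x ≠ fc n c y := by
    intro x y hb
    rcases x with ⟨t, q⟩ | ⟨s, xx⟩ <;> rcases y with ⟨t', q'⟩ | ⟨s', yy⟩ <;>
      simp only [base] at hb
    · obtain ⟨rfl, h1, h2⟩ := hb
      exact hc _ _ h2
    · obtain ⟨hts, hIn⟩ := hb
      show c (th n (t : ℕ) (q : ℕ)) ≠ dval n c (s' : ℕ) (yy : ℕ)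
      rw [hts]
      exact ine_ne n c _ _ _ hIn
    · obtain ⟨hts, hOut⟩ := hb
      show dval n c (s : ℕ) (xx : ℕ) ≠ c (th n (t' : ℕ) (q' : ℕ))
      rw [hts]
      exact oute_ne n c _ _ _ hOut
    · obtain ⟨rfl, h1, h2⟩ := hb
      show dval n c (s : ℕ) (xx : ℕ) ≠ dval n c (s : ℕ) (yy : ℕ)
      rw [show (yy : ℕ) = (xx : ℕ) + 1 from h1]
      exact intra_ne n c _ _ h2
  intro x y h
  rw [HH, SimpleGraph.fromRel_adj] at h
  rcases h.2 with hb | hb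
  · exact key _ _ hb
  · exact (key _ _ hb).symm

end RM4


namespace RM4

lemma tN_inj (n : ℕ) : Function.Injective (tN (n := n)) := by
  intro a b h
  unfold tN at h
  obtain ⟨hc, hr⟩ := mulB_inj (rww_lt a) (rww_lt b) h
  rcases a with ⟨ta, qa⟩ | ⟨sa, xa⟩ <;> rcases b with ⟨tb, qb⟩ | ⟨sb, xb⟩ <;>
    simp only [cl, rww] at hc hr
  · rw [show ta = tb from Fin.ext (by omega), show qa = qb from Fin.ext hr]
  · exact absurd hc (by omega)
  · exact absurd hc (by omega)
  · rw [show sa = sb from Fin.ext (by omega), show xa = xb from Fin.ext hr]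

lemma soundT' (n : ℕ) (A : ℕ → ℕ → Prop) (f : CW n → Fin 3)
    (hf : ∀ x y, (HH n A).Adj x y → f x ≠ f y)
    (t : ℕ) (ht : t ≤ T n) (q : ℕ) (hq : q < n) (r : ℕ) (hr : r < n)
    (hth : th n t q = r) :
    f (.inl (⟨t, by omega⟩, ⟨q, hq⟩)) = f (.inl (⟨0, by omega⟩, ⟨r, hr⟩)) := by
  subst hth
  exact soundT n A f hf t ht q hq

lemma sound_pair (n : ℕ) (A : ℕ → ℕ → Prop) (f : CW n → Fin 3)
    (hf : ∀ x y, (HH n A).Adj x y → f x ≠ f y)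
    (k j : ℕ) (hkj : k < j) (hjn : j < n) (hA : A k j) (hkn : k < n) :
    f (.inl (⟨0, by omega⟩, ⟨k, hkn⟩)) ≠ f (.inl (⟨0, by omega⟩, ⟨j, hjn⟩)) := by
  obtain ⟨m1, m2, m3⟩ := meet hkj hjn
  have hq1 : j - k - 1 < n := by omega
  have hq2 : j - k < n := by omega
  have hedge : (HH n A).Adj (.inl (⟨j * n + k, by omega⟩, ⟨j - k - 1, hq1⟩))
      (.inl (⟨j * n + k, by omega⟩, ⟨j - k, hq2⟩)) := by
    rw [HH, SimpleGraph.fromRel_adj]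
    refine ⟨?_, Or.inl ?_⟩
    · intro hEq
      rw [Sum.inl.injEq, Prod.mk.injEq] at hEq
      have h5 : j - k - 1 = j - k := congrArg Fin.val hEq.2
      omega
    · refine ⟨rfl, show j - k = (j - k - 1) + 1 by omega, ?_⟩
      show A (th n (j * n + k) (j - k - 1)) (th n (j * n + k) (j - k))
      rw [m1, m2]; exact hA
  have hs1 := soundT' n A f hf (j * n + k) (by omega) (j - k - 1) hq1 k hkn m1
  have hs2 := soundT' n A f hf (j * n + k) (by omega) (j - k) hq2 j hjn m2
  have hne := hf _ _ hedge
  rw [hs1, hs2] at hne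
  exact hne

end RM4

open RM4 in
theorem realization_M4_free'
    {VG : Type*} [Fintype VG] (G : SimpleGraph VG) :
    ∃ (W : Type) (_ : Fintype W) (H : SimpleGraph W) (ι : VG → W) (τ : W → ℝ)
      (L : W → Finset (Fin 3)),
      Function.Injective ι ∧ Function.Injective τ ∧
      (∀ u : VG, L (ι u) = (Finset.univ : Finset (Fin 3))) ∧
      (∀ f : W → Fin 3, (∀ x y, H.Adj x y → f x ≠ f y) → (∀ x, f x ∈ L x) →
        ∀ u v : VG, G.Adj u v → f (ι u) ≠ f (ι v)) ∧
      (∀ g : VG → Fin 3, (∀ u v, G.Adj u v → g u ≠ g v) →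
        ∃ f : W → Fin 3, (∀ x y, H.Adj x y → f x ≠ f y) ∧ (∀ x, f x ∈ L x) ∧
          ∀ u : VG, f (ι u) = g u) ∧
      PatternFree H τ M4 := by
  classical
  let n := Fintype.card VG
  let e : VG ≃ Fin n := Fintype.equivFin VG
  let A : ℕ → ℕ → Prop := fun a b =>
    ∃ (ha : a < n) (hb : b < n), G.Adj (e.symm ⟨a, ha⟩) (e.symm ⟨b, hb⟩)
  refine ⟨CW n, inferInstance, HH n A,
    fun u => Sum.inl (⟨0, by omega⟩, e u),
    fun w => ((tN (n := n) w : ℕ) : ℝ),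
    fun _ => Finset.univ, ?_, ?_, ?_, ?_, ?_, ?_⟩
  · intro u v h
    rw [Sum.inl.injEq, Prod.mk.injEq] at h
    exact e.injective h.2
  · intro a b h
    simp only at h
    exact tN_inj n (by exact_mod_cast h)
  · intro u; rfl
  · intro f hf _ u v huv
    have hne : (e u : ℕ) ≠ (e v : ℕ) := by
      intro h
      exact G.ne_of_adj huv (e.injective (Fin.ext h))
    rcases Nat.lt_or_ge (e u : ℕ) (e v : ℕ) with hlt | hge
    · have hA : A (e u : ℕ) (e v : ℕ) :=
        ⟨(e u).isLt, (e v).isLt, by simpa using huv⟩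
      exact sound_pair n A f hf (e u : ℕ) (e v : ℕ) hlt (e v).isLt hA (e u).isLt
    · have hlt' : (e v : ℕ) < (e u : ℕ) := by omega
      have hA : A (e v : ℕ) (e u : ℕ) :=
        ⟨(e v).isLt, (e u).isLt, by simpa using huv.symm⟩
      exact (sound_pair n A f hf (e v : ℕ) (e u : ℕ) hlt' (e u).isLt hA (e v).isLt).symm
  · intro g hg
    let c : ℕ → Fin 3 := fun m => if h : m < n then g (e.symm ⟨m, h⟩) else 0
    have hc : ∀ a b, A a b → c a ≠ c b := by
      rintro a b ⟨ha, hb, hadj⟩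
      show (if h : a < n then g (e.symm ⟨a, h⟩) else 0) ≠
        (if h : b < n then g (e.symm ⟨b, h⟩) else 0)
      rw [dif_pos ha, dif_pos hb]
      exact hg _ _ hadj
    refine ⟨fc n c, fc_proper n A c hc, fun x => Finset.mem_univ _, ?_⟩
    intro u
    show c (th n 0 (e u : ℕ)) = g u
    show (if h : (e u : ℕ) < n then g (e.symm ⟨(e u : ℕ), h⟩) else 0) = g u
    rw [dif_pos (e u).isLt]
    simp
  · exact crit (HH n A) cl rww (2 * n + 1) tN rww_lt (fun v => rfl)
      (hhE1 n A) (hhE2 n A) (hhE3 n A)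


/-- For every graph `G` there is a realization `(H, L)` of `G` (witnessed by the
injection `ι` of the vertices of `G` into those of `H`) together with an injective
ordering `τ` such that `(H, τ)` is `M_4`-free. -/
theorem realization_M4_free
    {VG : Type*} [Fintype VG] (G : SimpleGraph VG) :
    ∃ (W : Type) (_ : Fintype W) (H : SimpleGraph W) (ι : VG → W) (τ : W → ℝ)
      (L : W → Finset (Fin 3)),
      Function.Injective ι ∧ Function.Injective τ ∧
      (∀ u : VG, L (ι u) = (Finset.univ : Finset (Fin 3))) ∧
      (∀ f : W → Fin 3, (∀ x y, H.Adj x y → f x ≠ f y) → (∀ x, f x ∈ L x) →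
        ∀ u v : VG, G.Adj u v → f (ι u) ≠ f (ι v)) ∧
      (∀ g : VG → Fin 3, (∀ u v, G.Adj u v → g u ≠ g v) →
        ∃ f : W → Fin 3, (∀ x y, H.Adj x y → f x ≠ f y) ∧ (∀ x, f x ∈ L x) ∧
          ∀ u : VG, f (ι u) = g u) ∧
      PatternFree H τ M4 :=
  realization_M4_free' G
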